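/- Let u be a positive lower-semicontinuous supersolution of the Laplace equation (Δu ≤ 0 in the viscosity or distributional sense) on a punctured ball B_δ \ {0} ⊂ ℝⁿ, n ≥ 3. Then the function r ↦ r^{n−2} · min_{|x| = r} u(x) converges to a finite limit as r → 0⁺. -/

import Mathlib

open Filter Set Metric

/-- Second partial derivative `D_{ij}φ(x)` on `ℝⁿ = EuclideanSpace ℝ (Fin n)`. -/
noncomputable def D2 {n : ℕ} (φ : EuclideanSpace ℝ (Fin n) → ℝ)
    (x : EuclideanSpace ℝ (Fin n)) (i j : Fin n) : ℝ :=
  fderiv ℝ (fun y => fderiv ℝ φ y (EuclideanSpace.single j 1)) x (EuclideanSpace.single i 1)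


/-- A lower semicontinuous function on a nonempty compact set attains its minimum. -/
lemma lsc_exists_min {α : Type*} [TopologicalSpace α] {s : Set α} (hs : IsCompact s)
    (hne : s.Nonempty) {f : α → ℝ} (hf : LowerSemicontinuousOn f s) :
    ∃ x ∈ s, ∀ y ∈ s, f x ≤ f y := by
  by_contra hcon
  push_neg at hcon
  -- for each x ∈ s pick y x ∈ s with f (y x) < f x
  have hsel : ∀ x : α, x ∈ s → ∃ y, y ∈ s ∧ f y < f x := by
    intro x hx
    obtain ⟨y, hy, hy'⟩ := hcon x hx
    exact ⟨y, hy, hy'⟩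
  choose! y hy hfy using hsel
  -- for each x ∈ s, an open nbhd U x where f > f (y x)
  have hnb : ∀ x ∈ s, ∃ U : Set α, IsOpen U ∧ x ∈ U ∧ ∀ z ∈ U ∩ s, f (y x) < f z := by
    intro x hx
    have := hf x hx (f (y x)) (hfy x hx)
    rw [eventually_iff, mem_nhdsWithin] at this
    obtain ⟨U, hUo, hxU, hU⟩ := this
    exact ⟨U, hUo, hxU, fun z hz => hU hz⟩
  choose! U hUo hxU hUlt using hnb
  obtain ⟨t, hts, hcov⟩ := hs.elim_nhds_subcover U (fun x hx => (hUo x hx).mem_nhds (hxU x hx))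
  have htne : t.Nonempty := by
    rcases hne with ⟨x, hx⟩
    rcases mem_iUnion₂.1 (hcov hx) with ⟨i, hi, _⟩
    exact ⟨i, hi⟩
  obtain ⟨x₀, hx₀t, hmin⟩ := t.exists_min_image (fun x => f (y x)) htne
  have hx₀s : x₀ ∈ s := hts _ hx₀t
  have hyx₀ : y x₀ ∈ s := hy _ hx₀s
  rcases mem_iUnion₂.1 (hcov hyx₀) with ⟨i, hit, hiU⟩
  have his : i ∈ s := hts _ hit
  have h1 : f (y i) < f (y x₀) := hUlt i his _ ⟨hiU, hyx₀⟩
  exact absurd (hmin i hit) (not_le.2 h1)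

variable {n : ℕ}

local notation "E" => EuclideanSpace ℝ (Fin n)

noncomputable def Nsq (x : E) : ℝ := ∑ i, x i ^ 2

noncomputable def dN (x : E) : E →L[ℝ] ℝ :=
  ∑ i : Fin n, ((2 : ℝ) * x i) • (EuclideanSpace.proj (𝕜 := ℝ) i)

lemma Nsq_eq (x : E) : Nsq x = ‖x‖ ^ 2 := by
  have h := EuclideanSpace.norm_eq x
  rw [h, Real.sq_sqrt (by positivity)]
  simp [Nsq, Real.norm_eq_abs, sq_abs]

lemma Nsq_pos {x : E} (hx : x ≠ 0) : 0 < Nsq x := by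
  rw [Nsq_eq]
  have : 0 < ‖x‖ := norm_pos_iff.2 hx
  positivity

lemma hasFDerivAt_Nsq (x : E) : HasFDerivAt (Nsq (n := n)) (dN x) x := by
  have h : ∀ i ∈ Finset.univ, HasFDerivAt (fun y : E => y i ^ 2)
      (((2 : ℝ) * x i) • (EuclideanSpace.proj (𝕜 := ℝ) i)) x := by
    intro i _
    have hp : HasFDerivAt (fun y : E => y i) (EuclideanSpace.proj (𝕜 := ℝ) i) x :=
      (EuclideanSpace.proj (𝕜 := ℝ) i).hasFDerivAt
    have := hp.mul hp
    simp only [← pow_two] at this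
    refine this.congr_fderiv ?_
    ext v
    simp only [ContinuousLinearMap.smul_apply, ContinuousLinearMap.add_apply,
      PiLp.proj_apply, smul_eq_mul]
    ring
  exact HasFDerivAt.fun_sum h

lemma dN_single (x : E) (j : Fin n) : dN x (EuclideanSpace.single j (1:ℝ)) = 2 * x j := by
  simp only [dN, ContinuousLinearMap.sum_apply, ContinuousLinearMap.smul_apply,
    PiLp.proj_apply, EuclideanSpace.single_apply, smul_eq_mul]
  rw [Finset.sum_eq_single j]
  · simp
  · intro b _ hb; simp [hb]
  · simp

lemma contDiff_Nsq : ContDiff ℝ ⊤ (Nsq (n := n)) := by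
  apply ContDiff.sum
  intro i _
  exact ((EuclideanSpace.proj (𝕜 := ℝ) i).contDiff).pow 2

noncomputable def pf (a b ε q : ℝ) : E → ℝ :=
  fun y => a + b * (Nsq y) ^ q + ε * Nsq y

lemma pf_hasFDerivAt (a b ε q : ℝ) {x : E} (hx : x ≠ 0) :
    HasFDerivAt (pf a b ε q)
      ((b * (q * (Nsq x) ^ (q - 1)) + ε) • dN x) x := by
  have h1 : HasFDerivAt (fun y : E => (Nsq y) ^ q) ((q * (Nsq x) ^ (q - 1)) • dN x) x :=
    (hasFDerivAt_Nsq x).rpow_const (Or.inl (Nsq_pos hx).ne')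
  have h2 := h1.const_mul b
  have h3 := (hasFDerivAt_Nsq x).const_mul ε
  have h4 := (h2.add h3).const_add a
  have h5 := h4.congr_fderiv (show _ = (b * (q * (Nsq x) ^ (q - 1)) + ε) • dN x by rw [add_smul, smul_smul])
  exact h5.congr_of_eventuallyEq (Eventually.of_forall fun y => by unfold pf; simp only [Pi.add_apply]; ring)

lemma fderiv_pf_single (a b ε q : ℝ) {y : E} (hy : y ≠ 0) (j : Fin n) :
    fderiv ℝ (pf a b ε q) y (EuclideanSpace.single j 1)
      = (b * (q * (Nsq y) ^ (q - 1)) + ε) * (2 * y j) := by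
  rw [(pf_hasFDerivAt a b ε q hy).fderiv]
  rw [ContinuousLinearMap.smul_apply, dN_single, smul_eq_mul]

lemma D2_pf (a b ε q : ℝ) {x₀ : E} (hx₀ : x₀ ≠ 0) (i j : Fin n) :
    D2 (pf a b ε q) x₀ i j
      = (b * (q * (q - 1)) * (Nsq x₀) ^ (q - 2) * (2 * x₀ i)) * (2 * x₀ j)
        + (b * (q * (Nsq x₀) ^ (q - 1)) + ε) * (2 * (if j = i then 1 else 0)) := by
  have hopen : ∀ᶠ y in nhds x₀, y ∈ ({0}ᶜ : Set (EuclideanSpace ℝ (Fin n))) :=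
    isOpen_compl_singleton.eventually_mem hx₀
  have heq : (fun y : E => fderiv ℝ (pf a b ε q) y (EuclideanSpace.single j 1))
      =ᶠ[nhds x₀] fun y => (b * (q * (Nsq y) ^ (q - 1)) + ε) * (2 * y j) := by
    filter_upwards [hopen] with y hy
    exact fderiv_pf_single a b ε q hy j
  unfold D2
  rw [heq.fderiv_eq]
  -- derivative of G j at x₀
  have hq21 : q - 1 - 1 = q - 2 := by ring
  have hbase : HasFDerivAt (fun y : E => (Nsq y) ^ (q - 1))
      (((q - 1) * (Nsq x₀) ^ (q - 2)) • dN x₀) x₀ := by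
    have := (hasFDerivAt_Nsq x₀).rpow_const (p := q - 1) (Or.inl (Nsq_pos hx₀).ne')
    rwa [hq21] at this
  have hF1 : HasFDerivAt (fun y : E => b * (q * (Nsq y) ^ (q - 1)) + ε)
      ((b * (q * ((q - 1) * (Nsq x₀) ^ (q - 2)))) • dN x₀) x₀ := by
    have h := ((hbase.const_mul q).const_mul b).add_const ε
    exact h.congr_fderiv (by rw [smul_smul, smul_smul]; ring_nf)
  have hF2 : HasFDerivAt (fun y : E => 2 * y j)
      ((2 : ℝ) • (EuclideanSpace.proj (𝕜 := ℝ) j)) x₀ :=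
    ((EuclideanSpace.proj (𝕜 := ℝ) j).hasFDerivAt).const_mul 2
  have hG := hF1.fun_mul hF2
  rw [hG.fderiv]
  simp only [ContinuousLinearMap.add_apply, ContinuousLinearMap.smul_apply, dN_single,
    PiLp.proj_apply, EuclideanSpace.single_apply, smul_eq_mul]
  ring

lemma sum_D2_pf (a b ε : ℝ) {x₀ : E} (hx₀ : x₀ ≠ 0) :
    ∑ i, D2 (pf a b ε ((2 - (n : ℝ)) / 2)) x₀ i i = 2 * n * ε := by
  set q : ℝ := (2 - (n : ℝ)) / 2 with hq
  have hNpos := Nsq_pos hx₀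
  have key : ∀ i : Fin n, D2 (pf a b ε q) x₀ i i
      = b * (q * (q - 1)) * (Nsq x₀) ^ (q - 2) * 4 * (x₀ i ^ 2)
        + (b * (q * (Nsq x₀) ^ (q - 1)) + ε) * 2 := by
    intro i
    rw [D2_pf a b ε q hx₀ i i, if_pos rfl]
    ring
  rw [Finset.sum_congr rfl fun i _ => key i]
  rw [Finset.sum_add_distrib, ← Finset.mul_sum, Finset.sum_const, Finset.card_univ,
    Fintype.card_fin]
  have hsum : ∑ i, (x₀ i) ^ 2 = Nsq x₀ := rfl
  rw [hsum]
  have hpow : (Nsq x₀) ^ (q - 2) * Nsq x₀ = (Nsq x₀) ^ (q - 1) := by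
    nth_rewrite 2 [← Real.rpow_one (Nsq x₀)]
    rw [← Real.rpow_add hNpos]
    congr 1; ring
  have hq4 : 2 * (n : ℝ) + 4 * q - 4 = 0 := by rw [hq]; ring
  have : b * (q * (q - 1)) * Nsq x₀ ^ (q - 2) * 4 * Nsq x₀
      + (n : ℝ) * ((b * (q * Nsq x₀ ^ (q - 1)) + ε) * 2) = 2 * n * ε := by
    rw [show b * (q * (q - 1)) * Nsq x₀ ^ (q - 2) * 4 * Nsq x₀
        = b * (q * (q - 1)) * (Nsq x₀ ^ (q - 2) * Nsq x₀) * 4 by ring, hpow]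
    linear_combination (b * q * Nsq x₀ ^ (q - 1)) * hq4
  rw [nsmul_eq_mul]; linarith [this]

lemma pf_contDiffAt (a b ε q : ℝ) {x : E} (hx : x ≠ 0) :
    ContDiffAt ℝ 2 (pf a b ε q) x := by
  have h1 : ContDiffAt ℝ 2 (Nsq (n := n)) x := (contDiff_Nsq.of_le le_top).contDiffAt
  have h2 : ContDiffAt ℝ 2 (fun y : E => (Nsq y) ^ q) x :=
    h1.rpow_const_of_ne (Nsq_pos hx).ne'
  exact (contDiffAt_const.add (contDiffAt_const.mul h2)).add (contDiffAt_const.mul h1)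

lemma exists_test_function (δ : ℝ) (u : E → ℝ)
    (hupos : ∀ x : E, 0 < ‖x‖ → ‖x‖ < δ → 0 < u x)
    (r1 r2 a b ε : ℝ) (h1 : 0 < r1) (h2δ : r2 < δ)
    {x₀ : E} (h₀1 : r1 < ‖x₀‖) (h₀2 : ‖x₀‖ < r2)
    (hle : ∀ x : E, r1 ≤ ‖x‖ → ‖x‖ ≤ r2 → pf a b ε ((2 - (n:ℝ))/2) x ≤ u x)
    (htouch : pf a b ε ((2 - (n:ℝ))/2) x₀ = u x₀) :
    ∃ Φ : E → ℝ, ContDiff ℝ 2 Φ ∧ (∀ x : E, 0 < ‖x‖ → ‖x‖ < δ → Φ x ≤ u x) ∧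
      Φ x₀ = u x₀ ∧ ∑ i, D2 Φ x₀ i i = 2 * n * ε := by
  set q : ℝ := (2 - (n:ℝ))/2 with hqdef
  set φ : E → ℝ := pf a b ε q with hφdef
  set R : ℝ := min (‖x₀‖ - r1) (r2 - ‖x₀‖) with hRdef
  have hR : 0 < R := lt_min (by linarith) (by linarith)
  have hball : ∀ y : E, y ∈ closedBall x₀ (R/2) → r1 < ‖y‖ ∧ ‖y‖ < r2 := by
    intro y hy
    have hd : dist y x₀ ≤ R/2 := mem_closedBall.1 hy
    have habs : |‖y‖ - ‖x₀‖| ≤ R/2 :=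
      le_trans (abs_norm_sub_norm_le y x₀) (by rwa [← dist_eq_norm])
    have h₁ := (abs_le.1 habs).1
    have h₂ := (abs_le.1 habs).2
    have hm1 : R ≤ ‖x₀‖ - r1 := min_le_left _ _
    have hm2 : R ≤ r2 - ‖x₀‖ := min_le_right _ _
    constructor <;> linarith
  set χ : ContDiffBump x₀ := ⟨R/4, R/2, by positivity, by linarith⟩ with hχdef
  set Φ : E → ℝ := fun x => χ x * φ x with hΦdef
  have hne₀ : ∀ y : E, y ∈ closedBall x₀ (R/2) → y ≠ 0 := by
    intro y hy
    have := (hball y hy).1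
    intro h0
    rw [h0, norm_zero] at this
    linarith
  refine ⟨Φ, ?_, ?_, ?_, ?_⟩
  · -- smoothness
    rw [contDiff_iff_contDiffAt]
    intro x
    by_cases hx : x ∈ tsupport (χ : E → ℝ)
    · have hx' : x ∈ closedBall x₀ (R/2) := by rwa [χ.tsupport_eq] at hx
      exact (χ.contDiff.contDiffAt).mul (pf_contDiffAt a b ε q (hne₀ x hx'))
    · have hev : Φ =ᶠ[nhds x] fun _ => (0:ℝ) := by
        filter_upwards [(isClosed_tsupport (χ : E → ℝ)).isOpen_compl.eventually_mem hx] with y hy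
        have : (χ : E → ℝ) y = 0 := image_eq_zero_of_notMem_tsupport hy
        simp [hΦdef, this]
      exact (contDiffAt_const (c := (0:ℝ))).congr_of_eventuallyEq hev
  · -- Φ ≤ u on punctured ball
    intro x hx0 hxδ
    by_cases hxb : x ∈ closedBall x₀ (R/2)
    · have hx12 := hball x hxb
      have hφu : φ x ≤ u x := hle x hx12.1.le hx12.2.le
      rcases le_or_gt (φ x) 0 with hφ0 | hφ0
      · have : Φ x ≤ 0 := mul_nonpos_of_nonneg_of_nonpos χ.nonneg hφ0
        exact le_trans this (hupos x hx0 hxδ).le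
      · have h1le : (χ : E → ℝ) x * φ x ≤ 1 * φ x :=
          mul_le_mul_of_nonneg_right (χ.le_one (x := x)) hφ0.le
        rw [one_mul] at h1le
        exact le_trans h1le hφu
    · have hsupp : (χ : E → ℝ) x = 0 := by
        have : x ∉ Function.support (χ : E → ℝ) := by
          rw [χ.support_eq]
          exact fun h => hxb (ball_subset_closedBall h)
        simpa [Function.mem_support, not_not] using this
      have : Φ x = 0 := by simp [hΦdef, hsupp]
      rw [this]
      exact (hupos x hx0 hxδ).le
  · -- touch
    have h1' : (χ : E → ℝ) x₀ = 1 := χ.one_of_mem_closedBall (mem_closedBall_self (by positivity))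
    simp [hΦdef, h1', htouch]
  · -- Laplacian
    have hfd : ∀ y : E, y ∈ ball x₀ (R/4) → fderiv ℝ Φ y = fderiv ℝ φ y := by
      intro y hy
      have hev : Φ =ᶠ[nhds y] φ := by
        filter_upwards [isOpen_ball.eventually_mem hy] with z hz
        have h1' : (χ : E → ℝ) z = 1 := χ.one_of_mem_closedBall (ball_subset_closedBall hz)
        simp [hΦdef, h1']
      exact hev.fderiv_eq
    have hD2 : ∀ i j : Fin n, D2 Φ x₀ i j = D2 φ x₀ i j := by
      intro i j
      unfold D2
      have hev : (fun y => fderiv ℝ Φ y (EuclideanSpace.single j 1))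
          =ᶠ[nhds x₀] fun y => fderiv ℝ φ y (EuclideanSpace.single j 1) := by
        filter_upwards [isOpen_ball.eventually_mem (mem_ball_self (by positivity : (0:ℝ) < R/4))]
          with y hy
        rw [hfd y hy]
      rw [hev.fderiv_eq]
    calc ∑ i, D2 Φ x₀ i i = ∑ i, D2 (pf a b ε q) x₀ i i :=
          Finset.sum_congr rfl fun i _ => hD2 i i
      _ = 2 * n * ε := sum_D2_pf a b ε (hne₀ x₀ (mem_closedBall_self (by positivity)))

lemma comparison (δ : ℝ) (u : E → ℝ)
    (hupos : ∀ x : E, 0 < ‖x‖ → ‖x‖ < δ → 0 < u x)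
    (hlsc : LowerSemicontinuousOn u {x : E | 0 < ‖x‖ ∧ ‖x‖ < δ})
    (hsuper : ∀ x₀ : E, 0 < ‖x₀‖ → ‖x₀‖ < δ →
      ∀ φ : E → ℝ, ContDiff ℝ 2 φ →
        (∀ x : E, 0 < ‖x‖ → ‖x‖ < δ → φ x ≤ u x) → φ x₀ = u x₀ →
        (∑ i, D2 φ x₀ i i) ≤ 0)
    (r1 r2 a b : ℝ) (h1 : 0 < r1) (h12 : r1 < r2) (h2δ : r2 < δ)
    (hb1 : ∀ x : E, ‖x‖ = r1 → a + b * (r1^2) ^ ((2 - (n:ℝ))/2) ≤ u x)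
    (hb2 : ∀ x : E, ‖x‖ = r2 → a + b * (r2^2) ^ ((2 - (n:ℝ))/2) ≤ u x) :
    ∀ x : E, r1 ≤ ‖x‖ → ‖x‖ ≤ r2 → a + b * (Nsq x) ^ ((2 - (n:ℝ))/2) ≤ u x := by
  set q : ℝ := (2 - (n:ℝ))/2 with hqdef
  by_contra hcon
  push_neg at hcon
  obtain ⟨z, hz1, hz2, huz⟩ := hcon
  have hr2 : 0 < r2 := lt_trans h1 h12
  set d : ℝ := a + b * (Nsq z) ^ q - u z with hddef
  have hd : 0 < d := by simp only [hddef]; linarith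
  set ε : ℝ := d / (2 * r2 ^ 2) with hεdef
  have hε : 0 < ε := by positivity
  set φ₀ : E → ℝ := pf (a - ε * r2 ^ 2) b ε q with hφ₀def
  have hφ₀ : ∀ x : E, φ₀ x = a + b * (Nsq x) ^ q + ε * (Nsq x - r2 ^ 2) := by
    intro x; simp only [hφ₀def, pf]; ring
  set A : Set (EuclideanSpace ℝ (Fin n)) := {x | r1 ≤ ‖x‖ ∧ ‖x‖ ≤ r2} with hAdef
  have hAclosed : IsClosed A :=
    (isClosed_le continuous_const continuous_norm).inter
      (isClosed_le continuous_norm continuous_const)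
  have hAcomp : IsCompact A :=
    (isCompact_closedBall (0 : EuclideanSpace ℝ (Fin n)) r2).of_isClosed_subset hAclosed
      (fun x hx => mem_closedBall_zero_iff.2 hx.2)
  have hAsub : A ⊆ {x : EuclideanSpace ℝ (Fin n) | 0 < ‖x‖ ∧ ‖x‖ < δ} :=
    fun x hx => ⟨lt_of_lt_of_le h1 hx.1, lt_of_le_of_lt hx.2 h2δ⟩
  have hAne0 : ∀ x : E, x ∈ A → x ≠ 0 := by
    intro x hx h0
    have hx1 : r1 ≤ ‖x‖ := hx.1
    rw [h0, norm_zero] at hx1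
    linarith
  -- lower semicontinuity of u - φ₀ on A
  have hφ₀cont : ContinuousOn (fun x : E => -φ₀ x) A := by
    intro x hx
    exact ((pf_contDiffAt (a - ε * r2^2) b ε q (hAne0 x hx)).continuousAt.neg).continuousWithinAt
  have hv : LowerSemicontinuousOn (fun x : E => u x + -φ₀ x) A :=
    (hlsc.mono hAsub).add (hφ₀cont.lowerSemicontinuousOn)
  have hzA : z ∈ A := ⟨hz1, hz2⟩
  obtain ⟨x₀, hx₀A, hmin⟩ := lsc_exists_min hAcomp ⟨z, hzA⟩ hv
  set μ : ℝ := u x₀ + -φ₀ x₀ with hμdef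
  have hNz : Nsq z ≥ 0 := by rw [Nsq_eq]; positivity
  have hμneg : μ < 0 := by
    have h := hmin z hzA
    have hvz : u z + -φ₀ z ≤ -d / 2 := by
      rw [hφ₀ z]
      have hNz2 : Nsq z - r2^2 ≥ -r2^2 := by linarith
      have : ε * (Nsq z - r2 ^ 2) ≥ ε * (-r2^2) := mul_le_mul_of_nonneg_left hNz2 hε.le
      have hr2ne : r2 ≠ 0 := ne_of_gt hr2
      have hεr2 : ε * r2 ^ 2 = d / 2 := by
        rw [hεdef]; field_simp
      nlinarith
    calc μ ≤ u z + -φ₀ z := h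
      _ ≤ -d / 2 := hvz
      _ < 0 := by linarith
  -- the min point is interior
  have hsphere : ∀ x : E, ∀ r : ℝ, ‖x‖ = r → Nsq x = r ^ 2 := by
    intro x r hr; rw [Nsq_eq, hr]
  have hx₀1 : r1 < ‖x₀‖ := by
    rcases lt_or_eq_of_le hx₀A.1 with h | h
    · exact h
    · exfalso
      have hb := hb1 x₀ h.symm
      have : μ = u x₀ - (a + b * (r1^2) ^ q) - ε * (r1 ^ 2 - r2 ^ 2) := by
        rw [hμdef, hφ₀ x₀, hsphere x₀ r1 h.symm]; ring
      have hr12 : r1 ^ 2 < r2 ^ 2 := by nlinarith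
      nlinarith
  have hx₀2 : ‖x₀‖ < r2 := by
    rcases lt_or_eq_of_le hx₀A.2 with h | h
    · exact h
    · exfalso
      have hb := hb2 x₀ h
      have : μ = u x₀ - (a + b * (r2^2) ^ q) := by
        rw [hμdef, hφ₀ x₀, hsphere x₀ r2 h]; ring
      nlinarith
  -- build the test function
  have hle : ∀ x : E, r1 ≤ ‖x‖ → ‖x‖ ≤ r2 → pf (a - ε * r2 ^ 2 + μ) b ε q x ≤ u x := by
    intro x hxr1 hxr2
    have h := hmin x ⟨hxr1, hxr2⟩
    have hpfμ : pf (a - ε * r2 ^ 2 + μ) b ε q x = φ₀ x + μ := by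
      simp only [hφ₀def, pf]; ring
    rw [hpfμ]
    linarith
  have htouch : pf (a - ε * r2 ^ 2 + μ) b ε q x₀ = u x₀ := by
    have hpfμ : pf (a - ε * r2 ^ 2 + μ) b ε q x₀ = φ₀ x₀ + μ := by
      simp only [hφ₀def, pf]; ring
    rw [hpfμ, hμdef]; ring
  obtain ⟨Φ, hΦsmooth, hΦle, hΦtouch, hΦlap⟩ :=
    exists_test_function δ u hupos r1 r2 (a - ε * r2 ^ 2 + μ) b ε h1 h2δ hx₀1 hx₀2 hle htouch
  have hx₀pos : 0 < ‖x₀‖ := lt_trans h1 hx₀1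
  have hx₀δ : ‖x₀‖ < δ := lt_trans hx₀2 h2δ
  have := hsuper x₀ hx₀pos hx₀δ Φ hΦsmooth hΦle hΦtouch
  rw [hΦlap] at this
  have hn0 : 0 < (n : ℝ) := by
    have hne : n ≠ 0 := by
      rintro rfl
      exact hAne0 x₀ hx₀A (Subsingleton.elim x₀ 0)
    exact_mod_cast Nat.pos_of_ne_zero hne
  nlinarith


/-- If `u > 0` is a lower semicontinuous viscosity supersolution of the Laplace
equation (`Δu ≤ 0`) on a punctured ball `B_δ \ {0} ⊂ ℝⁿ`, `n ≥ 3`, then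
`r ↦ r^{n-2} min_{|x| = r} u` converges to a finite limit as `r → 0⁺`. -/
theorem stmt_11 (n : ℕ) (hn : 3 ≤ n) (δ : ℝ) (hδ : 0 < δ)
    (u : EuclideanSpace ℝ (Fin n) → ℝ)
    (hpos : ∀ x, 0 < ‖x‖ → ‖x‖ < δ → 0 < u x)
    (hlsc : LowerSemicontinuousOn u {x | 0 < ‖x‖ ∧ ‖x‖ < δ})
    (hsuper : ∀ x₀, 0 < ‖x₀‖ → ‖x₀‖ < δ →
      ∀ φ : EuclideanSpace ℝ (Fin n) → ℝ, ContDiff ℝ 2 φ →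
        (∀ x, 0 < ‖x‖ → ‖x‖ < δ → φ x ≤ u x) → φ x₀ = u x₀ →
        (∑ i, D2 φ x₀ i i) ≤ 0) :
    ∃ l : ℝ, Tendsto
      (fun r : ℝ => r ^ ((n : ℝ) - 2) * sInf (u '' Metric.sphere (0 : EuclideanSpace ℝ (Fin n)) r))
      (nhdsWithin 0 (Set.Ioi 0)) (nhds l) := by
  set q : ℝ := (2 - (n:ℝ))/2 with hqdef
  set p : ℝ := (n:ℝ) - 2 with hpdef
  have hn3 : (3:ℝ) ≤ (n:ℝ) := by exact_mod_cast hn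
  have hp : 0 < p := by rw [hpdef]; linarith
  have hq : q < 0 := by rw [hqdef]; linarith
  set m : ℝ → ℝ := fun r => sInf (u '' Metric.sphere (0 : EuclideanSpace ℝ (Fin n)) r)
    with hmdef
  -- basic facts about m
  have hSne : ∀ r : ℝ, 0 < r →
      ∃ x : (EuclideanSpace ℝ (Fin n)), x ∈ Metric.sphere (0 : EuclideanSpace ℝ (Fin n)) r := by
    intro r hr
    refine ⟨EuclideanSpace.single (⟨0, by omega⟩ : Fin n) r, ?_⟩
    rw [mem_sphere_zero_iff_norm, EuclideanSpace.norm_single]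
    exact abs_of_pos hr
  have hbdd : ∀ r : ℝ, 0 < r → r < δ →
      BddBelow (u '' Metric.sphere (0 : EuclideanSpace ℝ (Fin n)) r) := by
    intro r hr hrδ
    refine ⟨0, ?_⟩
    rintro y ⟨x, hx, rfl⟩
    rw [mem_sphere_zero_iff_norm] at hx
    exact (hpos x (hx ▸ hr) (hx ▸ hrδ)).le
  have hm_le : ∀ r : ℝ, 0 < r → r < δ → ∀ x : (EuclideanSpace ℝ (Fin n)), ‖x‖ = r → m r ≤ u x := by
    intro r hr hrδ x hx
    exact csInf_le (hbdd r hr hrδ) (mem_image_of_mem u (mem_sphere_zero_iff_norm.2 hx))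
  have hm_nonneg : ∀ r : ℝ, 0 < r → r < δ → 0 ≤ m r := by
    intro r hr hrδ
    obtain ⟨x, hx⟩ := hSne r hr
    refine le_csInf ⟨u x, mem_image_of_mem u hx⟩ ?_
    rintro y ⟨z, hz, rfl⟩
    rw [mem_sphere_zero_iff_norm] at hz
    exact (hpos z (hz ▸ hr) (hz ▸ hrδ)).le
  set s₂ : ℝ := ((δ/2)^2) ^ q with hs₂def
  set m₂ : ℝ := m (δ/2) with hm₂def
  have hδ2 : 0 < δ/2 := half_pos hδ
  have hδ2δ : δ/2 < δ := half_lt_self hδ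
  -- denominators
  have hdenom : ∀ r : ℝ, 0 < r → r < δ/2 → 0 < (r^2) ^ q - s₂ := by
    intro r hr hrδ2
    have h2 : r ^ 2 < (δ/2) ^ 2 := by nlinarith
    have := Real.rpow_lt_rpow_of_neg (by positivity : (0:ℝ) < r^2) h2 hq
    linarith
  set T : ℝ → ℝ := fun r => (m r - m₂) / ((r^2) ^ q - s₂) with hTdef
  -- monotonicity of T on Ioo 0 (δ/2)
  have hmono : MonotoneOn T (Set.Ioo 0 (δ/2)) := by
    rintro r' ⟨hr'0, hr'2⟩ r ⟨hr0, hr2⟩ hle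
    rcases eq_or_lt_of_le hle with rfl | hlt
    · exact le_rfl
    set b : ℝ := T r' with hbdef
    set a : ℝ := m₂ - b * s₂ with hadef
    have hd' : 0 < (r'^2) ^ q - s₂ := hdenom r' hr'0 hr'2
    have hbden : b * ((r'^2) ^ q - s₂) = m r' - m₂ := by
      rw [hbdef, hTdef]
      exact div_mul_cancel₀ _ hd'.ne'
    have hb1 : ∀ x : (EuclideanSpace ℝ (Fin n)), ‖x‖ = r' → a + b * (r'^2) ^ q ≤ u x := by
      intro x hx
      have : a + b * (r'^2) ^ q = m r' := by rw [hadef]; linarith [hbden]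
      rw [this]
      exact hm_le r' hr'0 (lt_trans hr'2 hδ2δ) x hx
    have hb2 : ∀ x : (EuclideanSpace ℝ (Fin n)), ‖x‖ = δ/2 → a + b * ((δ/2)^2) ^ q ≤ u x := by
      intro x hx
      have : a + b * ((δ/2)^2) ^ q = m₂ := by rw [hadef, ← hs₂def]; ring
      rw [this]
      exact hm_le (δ/2) hδ2 hδ2δ x hx
    have hcomp := comparison δ u hpos hlsc hsuper r' (δ/2) a b hr'0 hr'2 hδ2δ hb1 hb2
    -- lower bound for m r
    have hmr : a + b * (r^2) ^ q ≤ m r := by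
      obtain ⟨x, hx⟩ := hSne r hr0
      refine le_csInf ⟨u x, mem_image_of_mem u hx⟩ ?_
      rintro y ⟨z, hz, rfl⟩
      rw [mem_sphere_zero_iff_norm] at hz
      have hc := hcomp z (by rw [hz]; exact hlt.le) (by rw [hz]; exact hr2.le)
      rwa [Nsq_eq, hz] at hc
    have hdr : 0 < (r^2) ^ q - s₂ := hdenom r hr0 hr2
    rw [hTdef]
    rw [le_div_iff₀ hdr]
    have : a = m₂ - b * s₂ := hadef
    nlinarith [hmr]
  -- bounded below
  have hm₂0 : 0 ≤ m₂ := hm_nonneg (δ/2) hδ2 hδ2δ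
  have hδ4 : 0 < δ/4 := by linarith
  have hδ42 : δ/4 < δ/2 := by linarith
  set β : ℝ := ((δ/4)^2) ^ q - s₂ with hβdef
  have hβ : 0 < β := hdenom (δ/4) hδ4 hδ42
  have hbddT : BddBelow (T '' Set.Ioo 0 (δ/2)) := by
    refine ⟨min (T (δ/4)) (-(m₂ / β)), ?_⟩
    rintro y ⟨r, ⟨hr0, hr2⟩, rfl⟩
    rcases le_or_gt r (δ/4) with hcase | hcase
    · have hdr : 0 < (r^2) ^ q - s₂ := hdenom r hr0 hr2
      have hdrβ : β ≤ (r^2) ^ q - s₂ := by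
        rcases eq_or_lt_of_le hcase with rfl | hlt
        · exact le_rfl
        · have h2 : r ^ 2 < (δ/4) ^ 2 := by nlinarith
          have := Real.rpow_lt_rpow_of_neg (by positivity : (0:ℝ) < r^2) h2 hq
          rw [hβdef]; linarith
      have h1 : -(m₂ / β) ≤ -(m₂ / ((r^2) ^ q - s₂)) := by
        have := div_le_div_of_nonneg_left hm₂0 hβ hdrβ
        linarith
      have h2 : -(m₂ / ((r^2) ^ q - s₂)) ≤ T r := by
        have hnum : -m₂ ≤ m r - m₂ := by
          have := hm_nonneg r hr0 (lt_trans hr2 hδ2δ)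
          linarith
        calc -(m₂ / ((r^2) ^ q - s₂)) = (-m₂) / ((r^2) ^ q - s₂) := (neg_div _ _).symm
          _ ≤ (m r - m₂) / ((r^2) ^ q - s₂) := (div_le_div_iff_of_pos_right hdr).2 hnum
          _ = T r := rfl
      exact le_trans (min_le_right _ _) (le_trans h1 h2)
    · exact le_trans (min_le_left _ _)
        (hmono ⟨hδ4, hδ42⟩ ⟨hr0, hr2⟩ hcase.le)
  -- the limit
  have hIoo : (Set.Ioo (0:ℝ) (δ/2)).Nonempty := ⟨δ/4, hδ4, hδ42⟩
  have htendT : Tendsto T (nhdsWithin 0 (Set.Ioi 0))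
      (nhds (sInf (T '' Set.Ioo 0 (δ/2)))) :=
    MonotoneOn.tendsto_nhdsWithin_Ioo_right hIoo hmono hbddT
  set L : ℝ := sInf (T '' Set.Ioo 0 (δ/2)) with hLdef
  refine ⟨L, ?_⟩
  -- r^p → 0
  have hrp : Tendsto (fun r : ℝ => r ^ p) (nhdsWithin 0 (Set.Ioi 0)) (nhds 0) := by
    have hc : ContinuousAt (fun r : ℝ => r ^ p) 0 :=
      Real.continuousAt_rpow_const 0 p (Or.inr hp.le)
    have := hc.tendsto.mono_left (nhdsWithin_le_nhds (s := Set.Ioi (0:ℝ)))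
    rwa [Real.zero_rpow hp.ne'] at this
  have haux : Tendsto (fun r : ℝ => m₂ * r ^ p + T r * (1 - s₂ * r ^ p))
      (nhdsWithin 0 (Set.Ioi 0)) (nhds (m₂ * 0 + L * (1 - s₂ * 0))) :=
    ((tendsto_const_nhds.mul hrp).add
      (htendT.mul (tendsto_const_nhds.sub (tendsto_const_nhds.mul hrp))))
  have hL : m₂ * 0 + L * (1 - s₂ * 0) = L := by ring
  rw [hL] at haux
  refine haux.congr' ?_
  filter_upwards [Ioo_mem_nhdsGT_of_mem (⟨le_refl 0, hδ2⟩ : (0:ℝ) ∈ Set.Ico 0 (δ/2))]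
    with r hr
  obtain ⟨hr0, hr2⟩ := hr
  have hdr : 0 < (r^2) ^ q - s₂ := hdenom r hr0 hr2
  have hmreq : m r = m₂ + T r * ((r^2) ^ q - s₂) := by
    have : T r * ((r^2) ^ q - s₂) = m r - m₂ := div_mul_cancel₀ _ hdr.ne'
    linarith
  have hone : r ^ p * (r^2) ^ q = 1 := by
    rw [← Real.rpow_natCast r 2, ← Real.rpow_mul hr0.le, ← Real.rpow_add hr0]
    norm_num
    rw [show p + 2 * q = 0 by rw [hpdef, hqdef]; ring, Real.rpow_zero]
  show m₂ * r ^ p + T r * (1 - s₂ * r ^ p) = r ^ p * m r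
  linear_combination (-(r ^ p)) * hmreq + (-(T r)) * hone
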